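/- Let S be a monoid, regarded as a right S-act over itself via its multiplication. Then S is a cancellable S-act: for all S-acts B and C, S ⊔ B ≅ S ⊔ C implies B ≅ C. -/

import Mathlib

universe u v w

/-- A right `S`-act structure on a type `A`: a map `A × S → A`, `(a, s) ↦ a · s`,
with `a · 1 = a` and `a · (s*t) = (a · s) · t`. (`S`-acts are additionally required
to be nonempty; this is imposed via `Nonempty` hypotheses.) -/
class RAct (S : Type u) [Monoid S] (A : Type v) : Type (max u v) where
  act : A → S → A
  act_one : ∀ a : A, act a 1 = a
  act_mul : ∀ (a : A) (s t : S), act a (s * t) = act (act a s) t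

/-- Isomorphism of `S`-acts: a bijective action-preserving map. -/
def ActIso (S : Type u) [Monoid S] (A : Type v) (B : Type w) [RAct S A] [RAct S B] : Prop :=
  ∃ e : A ≃ B, ∀ (a : A) (s : S), e (RAct.act a s) = RAct.act (e a) s

/-- The coproduct (disjoint union) of two `S`-acts, with componentwise action. -/
instance sumRAct (S : Type u) [Monoid S] (A : Type v) (B : Type w) [RAct S A] [RAct S B] :
    RAct S (A ⊕ B) where
  act x s := Sum.map (fun a => RAct.act a s) (fun b => RAct.act b s) x
  act_one := by rintro (a | b) <;> simp [RAct.act_one]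
  act_mul := by rintro (a | b) s t <;> simp [RAct.act_mul]

/-- An `S`-act `A` is cancellable if `A ⊔ B ≅ A ⊔ C` implies `B ≅ C`
for all `S`-acts `B`, `C`. -/
def Cancellable (S : Type u) [Monoid S] (A : Type u) [RAct S A] : Prop :=
  ∀ (B C : Type u) [RAct S B] [RAct S C] [Nonempty B] [Nonempty C],
    ActIso S (A ⊕ B) (A ⊕ C) → ActIso S B C

/-- The monoid `S` as a right `S`-act over itself via its multiplication. -/
instance selfRAct (S : Type u) [Monoid S] : RAct S S where
  act a s := a * s
  act_one := mul_one
  act_mul a s t := (mul_assoc a s t).symm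

/-- The monoid `S`, as a right `S`-act over itself, is cancellable. -/
theorem monoid_cancellable (S : Type u) [Monoid S]
    (B C : Type u) [RAct S B] [RAct S C] [Nonempty B] [Nonempty C]
    (h : ActIso S (S ⊕ B) (S ⊕ C)) : ActIso S B C := by
  classical
  obtain ⟨e, he⟩ := h
  have hes : ∀ (y : S ⊕ C) (s : S), e.symm (RAct.act y s) = RAct.act (e.symm y) s := by
    intro y s
    apply e.injective
    rw [Equiv.apply_symm_apply, he, Equiv.apply_symm_apply]
  have hactBl : ∀ (x : S) (s : S), RAct.act (Sum.inl x : S ⊕ B) s = Sum.inl (x * s) :=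
    fun _ _ => rfl
  have hactBr : ∀ (b : B) (s : S), RAct.act (Sum.inr b : S ⊕ B) s = Sum.inr (RAct.act b s) :=
    fun _ _ => rfl
  have hactCl : ∀ (x : S) (s : S), RAct.act (Sum.inl x : S ⊕ C) s = Sum.inl (x * s) :=
    fun _ _ => rfl
  have hactCr : ∀ (c : C) (s : S), RAct.act (Sum.inr c : S ⊕ C) s = Sum.inr (RAct.act c s) :=
    fun _ _ => rfl
  rcases h1 : e (Sum.inl (1 : S)) with u | c₀
  · rcases h2 : e.symm (Sum.inl (1 : S)) with v | b₀
    · -- e maps inr B into inr C, e.symm maps inr C into inr B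
      have hB : ∀ b : B, ∃ c : C, e (Sum.inr b) = Sum.inr c := by
        intro b
        rcases h3 : e (Sum.inr b) with s | c
        · exfalso
          have h4 : Sum.inr b = e.symm (Sum.inl s) := by rw [← h3, Equiv.symm_apply_apply]
          rw [show (Sum.inl s : S ⊕ C) = RAct.act (Sum.inl 1) s by rw [hactCl, one_mul],
              hes, h2, hactBl] at h4
          exact nomatch h4
        · exact ⟨c, rfl⟩
      have hC : ∀ c : C, ∃ b : B, e.symm (Sum.inr c) = Sum.inr b := by
        intro c
        rcases h3 : e.symm (Sum.inr c) with s | b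
        · exfalso
          have h4 : Sum.inr c = e (Sum.inl s) := by rw [← h3, Equiv.apply_symm_apply]
          rw [show (Sum.inl s : S ⊕ B) = RAct.act (Sum.inl 1) s by rw [hactBl, one_mul],
              he, h1, hactCl] at h4
          exact nomatch h4
        · exact ⟨b, rfl⟩
      choose f hf using hB
      choose g hg using hC
      refine ⟨⟨f, g, ?_, ?_⟩, ?_⟩
      · intro b
        have h4 := hg (f b)
        rw [← hf b, Equiv.symm_apply_apply] at h4
        exact (Sum.inr.inj h4).symm
      · intro c
        have h4 := hf (g c)
        rw [← hg c, Equiv.apply_symm_apply] at h4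
        exact (Sum.inr.inj h4).symm
      · intro b s
        have h4 := he (Sum.inr b) s
        rw [hactBr, hf, hf, hactCr] at h4
        exact Sum.inr.inj h4
    · exfalso
      have h3 : e (Sum.inr b₀) = Sum.inl 1 := by rw [← h2, Equiv.apply_symm_apply]
      have h4 : e (Sum.inr (RAct.act b₀ u)) = Sum.inl u := by
        rw [← hactBr, he, h3, hactCl, one_mul]
      exact nomatch e.injective (h4.trans h1.symm)
  · rcases h2 : e.symm (Sum.inl (1 : S)) with v | b₀
    · exfalso
      have h3 : e (Sum.inl v) = Sum.inl 1 := by rw [← h2, Equiv.apply_symm_apply]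
      have h4 : e (Sum.inl v) = Sum.inr (RAct.act c₀ v) := by
        rw [show (Sum.inl v : S ⊕ B) = RAct.act (Sum.inl 1) v by rw [hactBl, one_mul],
            he, h1, hactCr]
      rw [h3] at h4
      exact nomatch h4
    · have heinl : ∀ s : S, e (Sum.inl s) = Sum.inr (RAct.act c₀ s) := by
        intro s
        rw [show (Sum.inl s : S ⊕ B) = RAct.act (Sum.inl 1) s by rw [hactBl, one_mul],
            he, h1, hactCr]
      have hesinl : ∀ s : S, e.symm (Sum.inl s) = Sum.inr (RAct.act b₀ s) := by
        intro s
        rw [show (Sum.inl s : S ⊕ C) = RAct.act (Sum.inl 1) s by rw [hactCl, one_mul],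
            hes, h2, hactBr]
      have heinr : ∀ s : S, e (Sum.inr (RAct.act b₀ s)) = Sum.inl s := by
        intro s; rw [← hesinl, Equiv.apply_symm_apply]
      have hesinr : ∀ s : S, e.symm (Sum.inr (RAct.act c₀ s)) = Sum.inl s := by
        intro s; rw [← heinl, Equiv.symm_apply_apply]
      set f : B → C := fun b => Sum.elim (fun s => RAct.act c₀ s) id (e (Sum.inr b)) with hfdef
      set g : C → B := fun c => Sum.elim (fun s => RAct.act b₀ s) id (e.symm (Sum.inr c)) with hgdef
      refine ⟨⟨f, g, ?_, ?_⟩, ?_⟩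
      · intro b
        rcases h3 : e (Sum.inr b) with s | c
        · have hfb : f b = RAct.act c₀ s := by rw [hfdef]; simp [h3]
          have hb : Sum.inr b = (Sum.inr (RAct.act b₀ s) : S ⊕ B) := by
            apply e.injective; rw [h3, heinr s]
          simp only [hgdef, hfb, hesinr s, Sum.elim_inl]
          exact (Sum.inr.inj hb).symm
        · have hfb : f b = c := by rw [hfdef]; simp [h3]
          have h4 : e.symm (Sum.inr c) = Sum.inr b := by rw [← h3, Equiv.symm_apply_apply]
          simp [hgdef, hfb, h4]
      · intro c
        rcases h3 : e.symm (Sum.inr c) with s | b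
        · have hgc : g c = RAct.act b₀ s := by rw [hgdef]; simp [h3]
          have hc : Sum.inr c = (Sum.inr (RAct.act c₀ s) : S ⊕ C) := by
            apply e.symm.injective; rw [h3, hesinr s]
          simp only [hfdef, hgc, heinr s, Sum.elim_inl]
          exact (Sum.inr.inj hc).symm
        · have hgc : g c = b := by rw [hgdef]; simp [h3]
          have h4 : e (Sum.inr b) = Sum.inr c := by rw [← h3, Equiv.apply_symm_apply]
          simp [hfdef, hgc, h4]
      · intro b s
        rcases h3 : e (Sum.inr b) with t | c
        · have h4 : e (Sum.inr (RAct.act b s)) = Sum.inl (t * s) := by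
            rw [← hactBr, he, h3, hactCl]
          simp [hfdef, h3, h4, RAct.act_mul]
        · have h4 : e (Sum.inr (RAct.act b s)) = Sum.inr (RAct.act c s) := by
            rw [← hactBr, he, h3, hactCr]
          simp [hfdef, h3, h4]
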